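/- Let n ≥ 1 and put m = 2n+1. Let F be a central maximal intersecting subfamily of P([m]), and let G be an intersecting family of n-element subsets of [m] with |G| ≤ (1/2)·binom(2n, n). Then H = (F \ G*) ∪ G is an ∅-minimal maximal intersecting subfamily of P([m]). -/

import Mathlib

open Finset

variable {m : ℕ}

/-- A family of finsets is intersecting if any two members meet. -/
def IsIntersecting (F : Finset (Finset (Fin m))) : Prop :=
  ∀ A ∈ F, ∀ B ∈ F, (A ∩ B).Nonempty

/-- A maximal intersecting subfamily of the power set of `Fin m`. -/
def IsMaxIntersecting (F : Finset (Finset (Fin m))) : Prop :=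
  IsIntersecting F ∧ ∀ G : Finset (Finset (Fin m)), IsIntersecting G → F ⊆ G → G ⊆ F

/-- A family is subset-closed if it contains all subsets of its members. -/
def IsSubsetClosed (F : Finset (Finset (Fin m))) : Prop :=
  ∀ A ∈ F, ∀ B ⊆ A, B ∈ F

/-- The embedding of a family into `ℝ^{P([m])}`. -/
def famVec (F : Finset (Finset (Fin m))) : Finset (Fin m) → ℝ := fun A =>
  if A ∈ F ∧ Aᶜ ∉ F then 1 else if A ∉ F ∧ Aᶜ ∈ F then -1 else 0

/-- The standard basis vector `e_A` of `ℝ^{P([m])}`. -/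
def stdBasis (A : Finset (Fin m)) : Finset (Fin m) → ℝ := fun B => if B = A then 1 else 0

/-- The star of a family centered at `a`. -/
def starFam (a : Fin m) (F : Finset (Finset (Fin m))) : Finset (Finset (Fin m)) :=
  F.filter fun A => a ∈ A

/-- The setwise complement (dual) `F* = {Aᶜ : A ∈ F}`. -/
def dualFam (F : Finset (Finset (Fin m))) : Finset (Finset (Fin m)) :=
  F.image fun A => Aᶜ

/-- `Tpath σ C k = C △ {σ(1), …, σ(k)}` (0-indexed: the images of the first `k` indices). -/
def Tpath (σ : Equiv.Perm (Fin m)) (C : Finset (Fin m)) (k : ℕ) : Finset (Fin m) :=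
  symmDiff C ((Finset.univ.filter fun i : Fin m => (i : ℕ) < k).image σ)

/-- The path-sum `Λ(H)` as a vector in `ℝ^{P([m]) × P([m])}`: at coordinate `(X, Y)` it is the
number of triples `(σ, C, k)` whose `k`-th path step goes from `X` to `Y`, minus the number of
triples whose `k`-th step goes from `Y` to `X`. -/
def LamW (H : Finset (Finset (Fin m))) (X Y : Finset (Fin m)) : ℝ :=
  ∑ σ : Equiv.Perm (Fin m), ∑ C ∈ H, ∑ k ∈ Finset.Icc 1 m,
    ((if Tpath σ C (k - 1) = X ∧ Tpath σ C k = Y then (1 : ℝ) else 0)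
      - (if Tpath σ C (k - 1) = Y ∧ Tpath σ C k = X then (1 : ℝ) else 0))

/-- A maximal intersecting family `F` is `∅`-minimal if for every `a`, the coordinate
`Λ(F*)_{(∅,{a})}` is the minimum of `Λ(F*)_{(A, A ∪ {a})}` over all `A ⊆ [m] \ {a}`. -/
def EmptyMinimal (F : Finset (Finset (Fin m))) : Prop :=
  ∀ a : Fin m, ∀ A : Finset (Fin m), a ∉ A →
    LamW (dualFam F) ∅ {a} ≤ LamW (dualFam F) A (insert a A)


namespace NCaux
variable {M : ℕ}


def blk (M j : ℕ) : Finset (Fin M) := univ.filter fun i : Fin M => (i : ℕ) < j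

lemma blk_succ {j : ℕ} (hj : j < M) :
    blk M (j + 1) = insert ⟨j, hj⟩ (blk M j) := by
  ext i
  simp only [blk, mem_filter, mem_univ, true_and, mem_insert, Fin.ext_iff]
  omega

lemma self_not_mem_blk {j : ℕ} (hj : j < M) : (⟨j, hj⟩ : Fin M) ∉ blk M j := by
  simp [blk]

lemma blk_card {j : ℕ} (hj : j ≤ M) : (blk M j).card = j := by
  induction j with
  | zero => simp [blk]
  | succ j ih =>
    rw [blk_succ (by omega), card_insert_of_notMem (self_not_mem_blk (by omega)),
      ih (by omega)]

def Pre (σ : Equiv.Perm (Fin M)) (j : ℕ) : Finset (Fin M) := (blk M j).image σ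

lemma Pre_succ (σ : Equiv.Perm (Fin M)) {j : ℕ} (hj : j < M) :
    Pre σ (j + 1) = insert (σ ⟨j, hj⟩) (Pre σ j) := by
  rw [Pre, blk_succ hj, image_insert]; rfl

lemma apply_not_mem_Pre (σ : Equiv.Perm (Fin M)) {j : ℕ} (hj : j < M) :
    σ ⟨j, hj⟩ ∉ Pre σ j := by
  simp only [Pre, mem_image, not_exists]
  rintro x ⟨hx, h⟩
  have := σ.injective h
  subst this
  exact self_not_mem_blk hj hx

lemma Pre_card (σ : Equiv.Perm (Fin M)) {j : ℕ} (hj : j ≤ M) : (Pre σ j).card = j := by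
  rw [Pre, card_image_of_injective _ σ.injective, blk_card hj]

lemma Pre_subset_erase (σ : Equiv.Perm (Fin M)) {j : ℕ} (hj : j < M) {a : Fin M}
    (ha : σ ⟨j, hj⟩ = a) : Pre σ j ⊆ univ.erase a := by
  intro x hx
  rw [mem_erase]
  refine ⟨fun h => ?_, mem_univ x⟩
  rw [← h] at ha
  rw [← ha] at hx
  exact apply_not_mem_Pre σ hj hx

/-- gluing a permutation fixing `a` and mapping `S` onto `S'` -/
lemma exists_perm_fix (a : Fin M) (S S' : Finset (Fin M)) (haS : a ∉ S) (haS' : a ∉ S')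
    (hc : S.card = S'.card) : ∃ π : Equiv.Perm (Fin M), π a = a ∧ S.image π = S' := by
  classical
  have e₁ : {x : Fin M // x ∈ S} ≃ {x : Fin M // x ∈ S'} := Finset.equivOfCardEq hc
  have hcc : Fintype.card {x : Fin M // ¬ x ∈ S} = Fintype.card {x : Fin M // ¬ x ∈ S'} := by
    rw [Fintype.card_subtype_compl, Fintype.card_subtype_compl]
    congr 1
    simp only [Fintype.card_coe]
    exact hc
  have e₂0 : {x : Fin M // ¬ x ∈ S} ≃ {x : Fin M // ¬ x ∈ S'} := Fintype.equivOfCardEq hcc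
  set e₂ : {x : Fin M // ¬ x ∈ S} ≃ {x : Fin M // ¬ x ∈ S'} :=
    e₂0.trans (Equiv.swap (e₂0 ⟨a, haS⟩) ⟨a, haS'⟩) with he₂
  have he₂a : e₂ ⟨a, haS⟩ = ⟨a, haS'⟩ := by
    simp [he₂, Equiv.swap_apply_left]
  set π : Equiv.Perm (Fin M) :=
    ((Equiv.sumCompl (fun x : Fin M => x ∈ S)).symm.trans
      ((e₁.sumCongr e₂).trans (Equiv.sumCompl (fun x : Fin M => x ∈ S')))) with hπ
  have hmemS : ∀ x (hx : x ∈ S), π x = (e₁ ⟨x, hx⟩ : Fin M) := by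
    intro x hx
    simp [hπ, Equiv.sumCompl_symm_apply_of_pos hx]
  have hπa : π a = a := by
    simp [hπ, Equiv.sumCompl_symm_apply_of_neg haS, he₂a]
  refine ⟨π, hπa, ?_⟩
  have hsub : S.image π ⊆ S' := by
    intro y hy
    rw [mem_image] at hy
    obtain ⟨x, hx, rfl⟩ := hy
    rw [hmemS x hx]
    exact (e₁ ⟨x, hx⟩).2
  apply Finset.eq_of_subset_of_card_le hsub
  rw [card_image_of_injective _ π.injective, hc]


lemma card_eq_of_fibers {α β : Type*} [DecidableEq α] [DecidableEq β] (s : Finset α) (f : α → β)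
    (t : Finset β) (h : ∀ x ∈ s, f x ∈ t) (c : ℕ)
    (hc : ∀ y ∈ t, (s.filter fun x => f x = y).card = c) : s.card = t.card * c := by
  rw [card_eq_sum_card_fiberwise h, sum_congr rfl hc, sum_const, smul_eq_mul]

lemma eval_fiber_const (b : Fin M) (a a' : Fin M) :
    (univ.filter fun σ : Equiv.Perm (Fin M) => σ b = a).card
      = (univ.filter fun σ : Equiv.Perm (Fin M) => σ b = a').card := by
  refine Finset.card_nbij' (fun σ => σ.trans (Equiv.swap a a'))
    (fun σ => σ.trans (Equiv.swap a a')) ?_ ?_ ?_ ?_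
  · intro σ hσ
    simp only [Finset.mem_coe, mem_filter, mem_univ, true_and] at hσ ⊢
    simp [Equiv.trans_apply, hσ, Equiv.swap_apply_left]
  · intro σ hσ
    simp only [Finset.mem_coe, mem_filter, mem_univ, true_and] at hσ ⊢
    simp [Equiv.trans_apply, hσ, Equiv.swap_apply_right]
  · intro σ hσ
    ext x
    simp [Equiv.swap_apply_self]
  · intro σ hσ
    ext x
    simp [Equiv.swap_apply_self]

lemma eval_fiber_card (b : Fin M) (a : Fin M) :
    (univ.filter fun σ : Equiv.Perm (Fin M) => σ b = a).card = (M - 1).factorial := by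
  have hM : 1 ≤ M := by
    rcases Nat.eq_zero_or_pos M with h | h
    · exact absurd (h ▸ b).isLt (by omega)
    · exact h
  have htot : (univ : Finset (Equiv.Perm (Fin M))).card
      = M * (univ.filter fun σ : Equiv.Perm (Fin M) => σ b = a).card := by
    have := card_eq_of_fibers (univ : Finset (Equiv.Perm (Fin M))) (fun σ => σ b)
      (univ : Finset (Fin M)) (fun x _ => mem_univ _)
      ((univ.filter fun σ : Equiv.Perm (Fin M) => σ b = a).card)
      (fun y _ => eval_fiber_const b y a)
    simpa [card_univ, Fintype.card_fin] using this
  have hfact : (univ : Finset (Equiv.Perm (Fin M))).card = M.factorial := by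
    rw [card_univ, Fintype.card_perm, Fintype.card_fin]
  have : M * (univ.filter fun σ : Equiv.Perm (Fin M) => σ b = a).card
      = M * (M - 1).factorial := by
    rw [← htot, hfact]
    cases M with
    | zero => omega
    | succ k => simp [Nat.factorial_succ]
  exact Nat.eq_of_mul_eq_mul_left (by omega) this

lemma Pre_fiber_const (j : ℕ) (hj : j < M) (a : Fin M) (S S' : Finset (Fin M))
    (hS : S ∈ powersetCard j (univ.erase a)) (hS' : S' ∈ powersetCard j (univ.erase a)) :
    ((univ.filter fun σ : Equiv.Perm (Fin M) => σ ⟨j, hj⟩ = a).filter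
        fun σ => Pre σ j = S).card
    = ((univ.filter fun σ : Equiv.Perm (Fin M) => σ ⟨j, hj⟩ = a).filter
        fun σ => Pre σ j = S').card := by
  rw [mem_powersetCard] at hS hS'
  have haS : a ∉ S := fun h => (mem_erase.1 (hS.1 h)).1 rfl
  have haS' : a ∉ S' := fun h => (mem_erase.1 (hS'.1 h)).1 rfl
  obtain ⟨π, hπa, hπS⟩ := exists_perm_fix a S S' haS haS' (hS.2.trans hS'.2.symm)
  have key : ∀ (T T' : Finset (Fin M)) (ρ : Equiv.Perm (Fin M)), ρ a = a → T.image ρ = T' →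
      ∀ σ : Equiv.Perm (Fin M), σ ⟨j, hj⟩ = a ∧ Pre σ j = T →
      (σ.trans ρ) ⟨j, hj⟩ = a ∧ Pre (σ.trans ρ) j = T' := by
    rintro T T' ρ hρa hρT σ ⟨h1, h2⟩
    constructor
    · simp [Equiv.trans_apply, h1, hρa]
    · rw [Pre, Equiv.coe_trans, ← Finset.image_image]
      rw [← Pre, h2, hρT]
  have hπS' : S'.image π.symm = S := by
    rw [← hπS, Finset.image_image]
    simp
  refine Finset.card_nbij' (fun σ => σ.trans π) (fun σ => σ.trans π.symm) ?_ ?_ ?_ ?_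
  · intro σ hσ
    simp only [Finset.mem_coe, mem_filter, mem_univ, true_and] at hσ ⊢
    exact key S S' π hπa hπS σ hσ
  · intro σ hσ
    simp only [Finset.mem_coe, mem_filter, mem_univ, true_and] at hσ ⊢
    exact key S' S π.symm (by rw [Equiv.symm_apply_eq, hπa]) hπS' σ hσ
  · intro σ hσ
    ext x
    simp
  · intro σ hσ
    ext x
    simp

lemma count_Pre_fiber (j : ℕ) (hj : j < M) (a : Fin M) (S : Finset (Fin M))
    (hS : S ∈ powersetCard j (univ.erase a)) :
    ((univ.filter fun σ : Equiv.Perm (Fin M) => σ ⟨j, hj⟩ = a).filter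
        fun σ => Pre σ j = S).card = j.factorial * (M - 1 - j).factorial := by
  set c := ((univ.filter fun σ : Equiv.Perm (Fin M) => σ ⟨j, hj⟩ = a).filter
      fun σ => Pre σ j = S).card with hc
  have htot : (univ.filter fun σ : Equiv.Perm (Fin M) => σ ⟨j, hj⟩ = a).card
      = (powersetCard j (univ.erase a)).card * c := by
    apply card_eq_of_fibers
    · intro σ hσ
      rw [mem_filter] at hσ
      rw [mem_powersetCard]
      exact ⟨Pre_subset_erase σ hj hσ.2, Pre_card σ (le_of_lt hj)⟩
    · intro S' hS'
      exact Pre_fiber_const j hj a S' S hS' hS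
  rw [eval_fiber_card] at htot
  have hcard : (powersetCard j (univ.erase a)).card = (M - 1).choose j := by
    rw [card_powersetCard, card_erase_of_mem (mem_univ a), card_univ, Fintype.card_fin]
  rw [hcard] at htot
  have hjm : j ≤ M - 1 := by omega
  have hfac : (M - 1).choose j * (j.factorial * (M - 1 - j).factorial) = (M - 1).factorial := by
    rw [← mul_assoc]
    exact Nat.choose_mul_factorial_mul_factorial hjm
  have hpos : 0 < (M - 1).choose j := Nat.choose_pos hjm
  apply Nat.eq_of_mul_eq_mul_left hpos
  rw [← htot, hfac]


lemma Tpath_eq (σ : Equiv.Perm (Fin M)) (C : Finset (Fin M)) (k : ℕ) :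
    Tpath σ C k = symmDiff C (Pre σ k) := rfl

lemma symmDiff_insert {a : Fin M} {X P : Finset (Fin M)} (hX : a ∉ X) (hP : a ∉ P) :
    symmDiff (insert a X) (symmDiff X P) = insert a P := by
  ext x
  by_cases hx : x = a
  · subst hx
    simp [Finset.mem_symmDiff, hX, hP]
  · simp only [Finset.mem_symmDiff, mem_insert, hx, false_or]
    tauto

lemma symmDiff_singleton_self {a : Fin M} {X : Finset (Fin M)} (hX : a ∉ X) :
    symmDiff X {a} = insert a X := by
  ext x
  by_cases hx : x = a
  · subst hx; simp [Finset.mem_symmDiff, hX]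
  · simp [Finset.mem_symmDiff, hx]

lemma insert_symmDiff_singleton_self {a : Fin M} {X : Finset (Fin M)} (hX : a ∉ X) :
    symmDiff (insert a X) {a} = X := by
  ext x
  by_cases hx : x = a
  · subst hx; simp [Finset.mem_symmDiff, hX]
  · simp only [Finset.mem_symmDiff, mem_insert, mem_singleton, hx]
    tauto

lemma symmDiff_singleton_eq_insert_iff {a e : Fin M} {X : Finset (Fin M)} (hX : a ∉ X) :
    symmDiff X {e} = insert a X ↔ e = a := by
  constructor
  · intro h
    have ha : a ∈ symmDiff X {e} := h ▸ mem_insert_self a X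
    rw [Finset.mem_symmDiff] at ha
    rcases ha with ⟨h1, _⟩ | ⟨h1, _⟩
    · exact absurd h1 hX
    · exact (mem_singleton.1 h1).symm
  · rintro rfl
    exact symmDiff_singleton_self hX

lemma insert_symmDiff_singleton_eq_iff {a e : Fin M} {X : Finset (Fin M)} (hX : a ∉ X) :
    symmDiff (insert a X) {e} = X ↔ e = a := by
  constructor
  · intro h
    by_contra he
    have ha : a ∈ symmDiff (insert a X) {e} := by
      rw [Finset.mem_symmDiff]
      left
      refine ⟨mem_insert_self a X, ?_⟩
      simp only [mem_singleton]
      exact fun h' => he h'.symm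
    rw [h] at ha
    exact hX ha
  · rintro rfl
    exact insert_symmDiff_singleton_self hX

lemma symmDiff_eq_iff' {C X P : Finset (Fin M)} : symmDiff C P = X ↔ C = symmDiff X P := by
  constructor
  · intro h
    rw [← h, symmDiff_symmDiff_cancel_right]
  · rintro rfl
    rw [symmDiff_symmDiff_cancel_right]

lemma Tpath_succ (σ : Equiv.Perm (Fin M)) (C : Finset (Fin M)) {j : ℕ} (hj : j < M) :
    Tpath σ C (j + 1) = symmDiff (Tpath σ C j) {σ ⟨j, hj⟩} := by
  rw [Tpath_eq, Tpath_eq, Pre_succ σ hj]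
  have h1 : insert (σ ⟨j, hj⟩) (Pre σ j) = symmDiff (Pre σ j) {σ ⟨j, hj⟩} := by
    ext x
    by_cases hx : x = σ ⟨j, hj⟩
    · subst hx; simp [Finset.mem_symmDiff, apply_not_mem_Pre σ hj]
    · simp [Finset.mem_symmDiff, hx]
  rw [h1, ← symmDiff_assoc]

/-- inner sum over C -/
lemma inner_sum (H' : Finset (Finset (Fin M))) (a : Fin M) (X : Finset (Fin M)) (hX : a ∉ X)
    (σ : Equiv.Perm (Fin M)) {j : ℕ} (hj : j < M) :
    (∑ C ∈ H',
      ((if Tpath σ C j = X ∧ Tpath σ C (j + 1) = insert a X then (1 : ℝ) else 0)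
        - (if Tpath σ C j = insert a X ∧ Tpath σ C (j + 1) = X then (1 : ℝ) else 0)))
    = if σ ⟨j, hj⟩ = a then
        ((if symmDiff X (Pre σ j) ∈ H' then (1 : ℝ) else 0)
          - (if symmDiff (insert a X) (Pre σ j) ∈ H' then (1 : ℝ) else 0)) else 0 := by
  have hcancel : ∀ C : Finset (Fin M), Tpath σ C j = X ↔ C = symmDiff X (Pre σ j) := by
    intro C
    rw [Tpath_eq]
    exact symmDiff_eq_iff'
  have hcancel' : ∀ C : Finset (Fin M), Tpath σ C j = insert a X ↔
      C = symmDiff (insert a X) (Pre σ j) := by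
    intro C
    rw [Tpath_eq]
    exact symmDiff_eq_iff'
  have hc1 : ∀ C : Finset (Fin M),
      (Tpath σ C j = X ∧ Tpath σ C (j + 1) = insert a X)
        ↔ (C = symmDiff X (Pre σ j) ∧ σ ⟨j, hj⟩ = a) := by
    intro C
    constructor
    · rintro ⟨h1, h2⟩
      rw [Tpath_succ σ C hj, h1] at h2
      exact ⟨(hcancel C).1 h1, (symmDiff_singleton_eq_insert_iff hX).1 h2⟩
    · rintro ⟨h1, h2⟩
      have hT : Tpath σ C j = X := (hcancel C).2 h1
      refine ⟨hT, ?_⟩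
      rw [Tpath_succ σ C hj, hT, h2]
      exact (symmDiff_singleton_eq_insert_iff hX).2 rfl
  have hc2 : ∀ C : Finset (Fin M),
      (Tpath σ C j = insert a X ∧ Tpath σ C (j + 1) = X)
        ↔ (C = symmDiff (insert a X) (Pre σ j) ∧ σ ⟨j, hj⟩ = a) := by
    intro C
    constructor
    · rintro ⟨h1, h2⟩
      rw [Tpath_succ σ C hj, h1] at h2
      exact ⟨(hcancel' C).1 h1, (insert_symmDiff_singleton_eq_iff hX).1 h2⟩
    · rintro ⟨h1, h2⟩
      have hT : Tpath σ C j = insert a X := (hcancel' C).2 h1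
      refine ⟨hT, ?_⟩
      rw [Tpath_succ σ C hj, hT, h2]
      exact (insert_symmDiff_singleton_eq_iff hX).2 rfl
  rw [Finset.sum_sub_distrib]
  have e1 : ∀ C ∈ H', (if Tpath σ C j = X ∧ Tpath σ C (j + 1) = insert a X then (1:ℝ) else 0)
      = if C = symmDiff X (Pre σ j) ∧ σ ⟨j, hj⟩ = a then (1:ℝ) else 0 := by
    intro C _; exact if_congr (hc1 C) rfl rfl
  have e2 : ∀ C ∈ H', (if Tpath σ C j = insert a X ∧ Tpath σ C (j + 1) = X then (1:ℝ) else 0)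
      = if C = symmDiff (insert a X) (Pre σ j) ∧ σ ⟨j, hj⟩ = a then (1:ℝ) else 0 := by
    intro C _; exact if_congr (hc2 C) rfl rfl
  rw [Finset.sum_congr rfl e1, Finset.sum_congr rfl e2]
  by_cases ha : σ ⟨j, hj⟩ = a
  · simp only [ha, and_true]
    rw [Finset.sum_ite_eq' H' (symmDiff X (Pre σ j)) (fun _ => (1:ℝ)),
      Finset.sum_ite_eq' H' (symmDiff (insert a X) (Pre σ j)) (fun _ => (1:ℝ))]
    simp
  · simp [ha]

namespace Master

variable (H' : Finset (Finset (Fin M))) (a : Fin M) (X : Finset (Fin M))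

/-- weight -/
noncomputable def w (M d : ℕ) : ℝ := ((d.factorial * (M - 1 - d).factorial : ℕ) : ℝ)

noncomputable def ψ : Finset (Fin M) → ℝ := fun S =>
  (if symmDiff X S ∈ H' then (1 : ℝ) else 0)
    - (if symmDiff (insert a X) S ∈ H' then (1 : ℝ) else 0)

noncomputable def Φ : ℕ → Equiv.Perm (Fin M) → ℝ := fun j σ =>
  if h : j < M then (if σ ⟨j, h⟩ = a then ψ H' a X (Pre σ j) else 0) else 0

lemma lamW_master (hX : a ∉ X) :
    LamW H' X (insert a X)
      = ∑ P ∈ (univ.erase a).powerset,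
          w M (symmDiff X P).card
            * ((if P ∈ H' then (1 : ℝ) else 0) - (if insert a P ∈ H' then (1 : ℝ) else 0)) := by
  have hM : 0 < M := by
    rcases Nat.eq_zero_or_pos M with h | h
    · exact absurd (h ▸ a).isLt (by omega)
    · exact h
  have h1 : LamW H' X (insert a X) = ∑ σ : Equiv.Perm (Fin M), ∑ j ∈ range M, Φ H' a X j σ := by
    rw [LamW]
    refine Finset.sum_congr rfl fun σ _ => ?_
    rw [Finset.sum_comm]
    refine Finset.sum_nbij' (fun k => k - 1) (fun j => j + 1) ?_ ?_ ?_ ?_ ?_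
    · intro k hk
      rw [mem_Icc] at hk
      rw [mem_range]
      omega
    · intro j hj
      rw [mem_range] at hj
      rw [mem_Icc]
      omega
    · intro k hk
      rw [mem_Icc] at hk
      omega
    · intro j _
      omega
    · intro k hk
      rw [mem_Icc] at hk
      obtain ⟨j, rfl⟩ : ∃ j, k = j + 1 := ⟨k - 1, by omega⟩
      have hj : j < M := by omega
      simp only [Nat.add_sub_cancel]
      rw [inner_sum H' a X hX σ hj, Φ, dif_pos hj]
      simp only [ψ]
  have h3 : ∀ j, ∀ hj : j < M, (∑ σ : Equiv.Perm (Fin M), Φ H' a X j σ)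
      = ∑ S ∈ powersetCard j (univ.erase a), w M j * ψ H' a X S := by
    intro j hj
    have e1 : (∑ σ : Equiv.Perm (Fin M), Φ H' a X j σ)
        = ∑ σ ∈ univ.filter (fun σ : Equiv.Perm (Fin M) => σ ⟨j, hj⟩ = a),
            ψ H' a X (Pre σ j) := by
      rw [Finset.sum_filter]
      refine Finset.sum_congr rfl fun σ _ => ?_
      rw [Φ, dif_pos hj]
    rw [e1]
    rw [← Finset.sum_fiberwise_of_maps_to (g := fun σ => Pre σ j)
      (t := powersetCard j (univ.erase a)) (fun σ hσ => ?_)]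
    · refine Finset.sum_congr rfl fun S hS => ?_
      have e2 : ∀ σ ∈ (univ.filter (fun σ : Equiv.Perm (Fin M) => σ ⟨j, hj⟩ = a)).filter
          (fun σ => Pre σ j = S), ψ H' a X (Pre σ j) = ψ H' a X S := by
        intro σ hσ
        rw [mem_filter] at hσ
        rw [hσ.2]
      rw [Finset.sum_congr rfl e2, Finset.sum_const, count_Pre_fiber j hj a S hS,
        nsmul_eq_mul, w]
    · rw [mem_filter] at hσ
      rw [mem_powersetCard]
      exact ⟨Pre_subset_erase σ hj hσ.2, Pre_card σ (le_of_lt hj)⟩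
  have h4 : LamW H' X (insert a X)
      = ∑ j ∈ range M, ∑ S ∈ powersetCard j (univ.erase a), w M (S.card) * ψ H' a X S := by
    rw [h1, Finset.sum_comm]
    refine Finset.sum_congr rfl fun j hj => ?_
    rw [mem_range] at hj
    rw [h3 j hj]
    refine Finset.sum_congr rfl fun S hS => ?_
    rw [(mem_powersetCard.1 hS).2]
  have h6 : (∑ P ∈ (univ.erase a).powerset, w M (P.card) * ψ H' a X P)
      = ∑ j ∈ range M, ∑ S ∈ powersetCard j (univ.erase a), w M (S.card) * ψ H' a X S := by
    rw [powerset_card_biUnion, Finset.sum_biUnion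
      (fun i _ j _ hij => (univ.erase a).pairwise_disjoint_powersetCard hij)]
    have : (univ.erase a).card + 1 = M := by
      rw [card_erase_of_mem (mem_univ a), card_univ, Fintype.card_fin]
      omega
    rw [this]
  rw [h4, ← h6]
  -- final reindex P ↦ X ∆ P
  have hXsub : X ⊆ univ.erase a := by
    intro x hx
    rw [mem_erase]
    exact ⟨fun h => hX (h ▸ hx), mem_univ x⟩
  refine Finset.sum_nbij' (fun P => symmDiff X P) (fun P => symmDiff X P) ?_ ?_ ?_ ?_ ?_
  · intro P hP
    rw [mem_powerset] at hP ⊢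
    exact le_trans symmDiff_le_sup (sup_le hXsub hP)
  · intro P hP
    rw [mem_powerset] at hP ⊢
    exact le_trans symmDiff_le_sup (sup_le hXsub hP)
  · intro P _
    exact symmDiff_symmDiff_cancel_left X P
  · intro P _
    exact symmDiff_symmDiff_cancel_left X P
  · intro P hP
    rw [mem_powerset] at hP
    have haP : a ∉ symmDiff X P := by
      intro h
      rw [Finset.mem_symmDiff] at h
      rcases h with ⟨h1, _⟩ | ⟨h1, _⟩
      · exact hX h1
      · exact (mem_erase.1 (hP h1)).1 rfl
    rw [ψ]
    have hc : symmDiff X (symmDiff X P) = P := symmDiff_symmDiff_cancel_left X P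
    rw [hc]
    have hi : symmDiff (insert a X) P = insert a (symmDiff X P) := by
      conv_lhs => rw [← hc]
      exact symmDiff_insert hX haP
    rw [hi]
end Master

lemma mem_dualFam {F : Finset (Finset (Fin m))} {C : Finset (Fin m)} :
    C ∈ dualFam F ↔ Cᶜ ∈ F := by
  rw [dualFam, mem_image]
  constructor
  · rintro ⟨A, hA, rfl⟩
    rwa [compl_compl]
  · intro h
    exact ⟨Cᶜ, h, compl_compl C⟩

section family
variable {n : ℕ}

def majFam (n : ℕ) : Finset (Finset (Fin (2 * n + 1))) :=
  univ.filter fun A => n + 1 ≤ A.card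

lemma majFam_intersecting : IsIntersecting (majFam n) := by
  intro A hA B hB
  rw [majFam, mem_filter] at hA hB
  rw [← card_pos]
  have h1 : (A ∪ B).card + (A ∩ B).card = A.card + B.card :=
    card_union_add_card_inter A B
  have h2 : (A ∪ B).card ≤ 2 * n + 1 := by
    have := card_le_card (subset_univ (A ∪ B))
    rwa [card_univ, Fintype.card_fin] at this
  omega

lemma F_eq_majFam {F : Finset (Finset (Fin (2 * n + 1)))} (hF : IsMaxIntersecting F)
    (hcentral : ∀ A ∈ F, 2 * n + 1 ≤ 2 * A.card) : F = majFam n := by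
  have hsub : F ⊆ majFam n := by
    intro A hA
    rw [majFam, mem_filter]
    exact ⟨mem_univ A, by have := hcentral A hA; omega⟩
  exact le_antisymm hsub (hF.2 (majFam n) majFam_intersecting hsub)

variable {G : Finset (Finset (Fin (2 * n + 1)))}

lemma card_compl' (C : Finset (Fin (2 * n + 1))) : Cᶜ.card = 2 * n + 1 - C.card := by
  rw [card_compl, Fintype.card_fin]

lemma mem_H {C : Finset (Fin (2 * n + 1))} :
    C ∈ (majFam n \ dualFam G) ∪ G ↔ (n + 1 ≤ C.card ∧ Cᶜ ∉ G) ∨ C ∈ G := by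
  rw [mem_union, mem_sdiff, majFam, mem_filter, mem_dualFam]
  constructor
  · rintro (⟨⟨_, h1⟩, h2⟩ | h)
    · exact Or.inl ⟨h1, h2⟩
    · exact Or.inr h
  · rintro (⟨h1, h2⟩ | h)
    · exact Or.inl ⟨⟨mem_univ C, h1⟩, h2⟩
    · exact Or.inr h

lemma H_intersecting (hn : 1 ≤ n) (hGi : IsIntersecting G) (hGk : ∀ A ∈ G, A.card = n) :
    IsIntersecting ((majFam n \ dualFam G) ∪ G) := by
  have key : ∀ A B : Finset (Fin (2 * n + 1)), n + 1 ≤ A.card → Aᶜ ∉ G → B ∈ G →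
      (A ∩ B).Nonempty := by
    intro A B hA hAc hB
    rw [nonempty_iff_ne_empty]
    intro hemp
    have hBA : B ⊆ Aᶜ := by
      intro x hx
      rw [mem_compl]
      intro hxA
      have : x ∈ A ∩ B := mem_inter.2 ⟨hxA, hx⟩
      rw [hemp] at this
      exact notMem_empty x this
    have hcard : Aᶜ.card ≤ B.card := by
      rw [card_compl', hGk B hB]
      omega
    have : B = Aᶜ := eq_of_subset_of_card_le hBA hcard
    rw [← this] at hAc
    exact hAc hB
  intro A hA B hB
  rw [mem_H] at hA hB
  rcases hA with ⟨hA1, hA2⟩ | hA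
  · rcases hB with ⟨hB1, hB2⟩ | hB
    · exact majFam_intersecting A (by rw [majFam, mem_filter]; exact ⟨mem_univ A, hA1⟩)
        B (by rw [majFam, mem_filter]; exact ⟨mem_univ B, hB1⟩)
    · exact key A B hA1 hA2 hB
  · rcases hB with ⟨hB1, hB2⟩ | hB
    · rw [inter_comm]
      exact key B A hB1 hB2 hA
    · exact hGi A hA B hB

lemma H_pair (hn : 1 ≤ n) (hGk : ∀ A ∈ G, A.card = n) (C : Finset (Fin (2 * n + 1))) :
    C ∈ (majFam n \ dualFam G) ∪ G ↔ Cᶜ ∉ (majFam n \ dualFam G) ∪ G := by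
  rw [mem_H, mem_H, compl_compl, card_compl']
  by_cases hc : n + 1 ≤ C.card
  · have hB : C ∉ G := fun h => by have := hGk C h; omega
    have hA' : ¬ (n + 1 ≤ 2 * n + 1 - C.card) := by omega
    constructor
    · rintro (⟨_, h2⟩ | h) h'
      · rcases h' with ⟨h3, _⟩ | h4
        · exact hA' h3
        · exact h2 h4
      · exact hB h
    · intro h
      exact Or.inl ⟨hc, fun hCc => h (Or.inr hCc)⟩
  · have hB' : Cᶜ ∉ G := fun h => by
      have := hGk _ h
      have := card_compl' C
      omega
    constructor
    · rintro (⟨h1, _⟩ | h) h'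
      · exact hc h1
      · rcases h' with ⟨_, h2⟩ | h3
        · exact h2 h
        · exact hB' h3
    · intro h
      right
      by_contra hCG
      exact h (Or.inl ⟨by omega, hCG⟩)

lemma H_max (hn : 1 ≤ n) (hGi : IsIntersecting G) (hGk : ∀ A ∈ G, A.card = n) :
    IsMaxIntersecting ((majFam n \ dualFam G) ∪ G) := by
  refine ⟨H_intersecting hn hGi hGk, ?_⟩
  intro G' hG' hsub X hX
  by_contra hXH
  have h2 : Xᶜ ∈ (majFam n \ dualFam G) ∪ G := by
    by_contra h
    exact hXH ((H_pair hn hGk X).2 h)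
  have h3 := hG' X hX Xᶜ (hsub h2)
  rw [nonempty_iff_ne_empty] at h3
  apply h3
  simp

end family
section gval
variable {n : ℕ} {G : Finset (Finset (Fin (2 * n + 1)))}

lemma compl_insert' (a : Fin (2 * n + 1)) (P : Finset (Fin (2 * n + 1))) :
    (insert a P)ᶜ = Pᶜ.erase a := by
  ext x
  simp only [mem_compl, mem_erase, mem_insert]
  tauto

lemma gval_cases (hn : 1 ≤ n) (hGk : ∀ A ∈ G, A.card = n) (a : Fin (2 * n + 1))
    (P : Finset (Fin (2 * n + 1))) (hP : a ∉ P) :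
    ((if Pᶜ ∈ (majFam n \ dualFam G) ∪ G then (1 : ℝ) else 0)
      - (if (insert a P)ᶜ ∈ (majFam n \ dualFam G) ∪ G then (1 : ℝ) else 0))
    = (if P.card = n then (1 : ℝ) else 0)
      + (if P.card = n - 1 ∧ insert a P ∈ G then (1 : ℝ) else 0)
      + (if P.card = n + 1 ∧ Pᶜ ∈ G then (1 : ℝ) else 0)
      - (if P.card = n ∧ P ∈ G then (1 : ℝ) else 0)
      - (if P.card = n ∧ Pᶜ.erase a ∈ G then (1 : ℝ) else 0) := by
  have hq : Pᶜ.card = 2 * n + 1 - P.card := card_compl' P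
  have haPc : a ∈ Pᶜ := mem_compl.2 hP
  have hPle : P.card ≤ 2 * n + 1 := by
    simpa using card_le_univ P
  have hr : (Pᶜ.erase a).card = 2 * n - P.card := by
    rw [card_erase_of_mem haPc, hq]
    omega
  have hins : (insert a P).card = P.card + 1 := card_insert_of_notMem hP
  have hmem1 : Pᶜ ∈ (majFam n \ dualFam G) ∪ G
      ↔ ((n + 1 ≤ Pᶜ.card ∧ P ∉ G) ∨ Pᶜ ∈ G) := by
    rw [mem_H, compl_compl]
  have hmem2 : (insert a P)ᶜ ∈ (majFam n \ dualFam G) ∪ G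
      ↔ ((n + 1 ≤ (Pᶜ.erase a).card ∧ insert a P ∉ G) ∨ Pᶜ.erase a ∈ G) := by
    rw [compl_insert' a P, mem_H, ← compl_insert' a P, compl_compl]
  by_cases h3 : P.card = n
  · have e1 : ¬(n = n - 1) := by omega
    have e2 : ¬(n = n + 1) := by omega
    have c1 : (Pᶜ ∈ (majFam n \ dualFam G) ∪ G) ↔ P ∉ G := by
      rw [hmem1]
      constructor
      · rintro (⟨_, h⟩ | h)
        · exact h
        · exact absurd (hGk _ h) (by omega)
      · intro h
        exact Or.inl ⟨by omega, h⟩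
    have c2 : ((insert a P)ᶜ ∈ (majFam n \ dualFam G) ∪ G) ↔ Pᶜ.erase a ∈ G := by
      rw [hmem2]
      constructor
      · rintro (⟨h, _⟩ | h)
        · omega
        · exact h
      · exact Or.inr
    by_cases hPG : P ∈ G <;> by_cases hRG : Pᶜ.erase a ∈ G <;>
      simp only [c1, c2, h3, e1, e2, hPG, hRG] <;> norm_num
  · by_cases h2 : P.card = n - 1
    · have c1 : Pᶜ ∈ (majFam n \ dualFam G) ∪ G :=
        hmem1.2 (Or.inl ⟨by omega, fun h => h3 (hGk _ h)⟩)
      have c2 : ((insert a P)ᶜ ∈ (majFam n \ dualFam G) ∪ G) ↔ insert a P ∉ G := by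
        rw [hmem2]
        constructor
        · rintro (⟨_, h⟩ | h)
          · exact h
          · exact absurd (hGk _ h) (by omega)
        · intro h
          exact Or.inl ⟨by omega, h⟩
      have e4 : ¬(n - 1 = n) := by omega
      have e5 : ¬(n - 1 = n + 1) := by omega
      by_cases hIG : insert a P ∈ G <;>
        simp only [c1, c2, h2, e4, e5, hIG] <;> norm_num
    · by_cases h1 : P.card = n + 1
      · have c1 : (Pᶜ ∈ (majFam n \ dualFam G) ∪ G) ↔ Pᶜ ∈ G := by
          rw [hmem1]
          constructor
          · rintro (⟨h, _⟩ | h)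
            · omega
            · exact h
          · exact Or.inr
        have c2 : (insert a P)ᶜ ∉ (majFam n \ dualFam G) ∪ G := by
          rw [hmem2]
          rintro (⟨h, _⟩ | h)
          · omega
          · exact absurd (hGk _ h) (by omega)
        have e6 : ¬(n + 1 = n) := by omega
        have e7 : ¬(n + 1 = n - 1) := by omega
        by_cases hQG : Pᶜ ∈ G <;>
          simp only [c1, c2, h1, e6, e7, hQG] <;> norm_num
      · rcases (show P.card + 2 ≤ n ∨ n + 2 ≤ P.card by omega) with hlow | hhigh
        · have c1 : Pᶜ ∈ (majFam n \ dualFam G) ∪ G :=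
            hmem1.2 (Or.inl ⟨by omega, fun h => h3 (hGk _ h)⟩)
          have c2 : (insert a P)ᶜ ∈ (majFam n \ dualFam G) ∪ G := by
            refine hmem2.2 (Or.inl ⟨by omega, fun h => ?_⟩)
            have := hGk _ h
            omega
          simp only [c1, c2, h1, h2, h3] <;> norm_num
        · have c1 : Pᶜ ∉ (majFam n \ dualFam G) ∪ G := by
            rw [hmem1]
            rintro (⟨h, _⟩ | h)
            · omega
            · have := hGk _ h
              omega
          have c2 : (insert a P)ᶜ ∉ (majFam n \ dualFam G) ∪ G := by
            rw [hmem2]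
            rintro (⟨h, _⟩ | h)
            · omega
            · have := hGk _ h
              omega
          simp only [c1, c2, h1, h2, h3] <;> norm_num

end gval

section weights
variable {n : ℕ}

def Wn (n d : ℕ) : ℕ := d.factorial * (2 * n - d).factorial

lemma Wn_key {d : ℕ} (hd : d ≤ 2 * n) : Wn n d * (2 * n).choose d = (2 * n).factorial := by
  rw [Wn]
  have := Nat.choose_mul_factorial_mul_factorial hd
  calc d.factorial * (2 * n - d).factorial * (2 * n).choose d
      = (2 * n).choose d * d.factorial * (2 * n - d).factorial := by ring
    _ = (2 * n).factorial := this

lemma two_n_div_two : 2 * n / 2 = n := by omega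

lemma Wn_min {d : ℕ} (hd : d ≤ 2 * n) : Wn n n ≤ Wn n d := by
  have hch : (2 * n).choose d ≤ (2 * n).choose n := by
    have := Nat.choose_le_middle d (2 * n)
    rwa [two_n_div_two] at this
  have h1 : Wn n n * (2 * n).choose n = Wn n d * (2 * n).choose d :=
    (Wn_key (by omega)).trans (Wn_key hd).symm
  have h2 : Wn n n * (2 * n).choose n ≤ Wn n d * (2 * n).choose n := by
    rw [h1]
    exact Nat.mul_le_mul_left _ hch
  exact Nat.le_of_mul_le_mul_right h2 (Nat.choose_pos (by omega))

lemma choose_mono_left : ∀ s, s ≤ n → ∀ r, r ≤ s → (2 * n).choose r ≤ (2 * n).choose s := by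
  intro s
  induction s with
  | zero =>
    intro _ r hr
    have : r = 0 := by omega
    subst this
    exact le_refl _
  | succ s ih =>
    intro hs r hr
    rcases Nat.eq_or_lt_of_le hr with rfl | hlt
    · exact le_refl _
    · have h1 : (2 * n).choose r ≤ (2 * n).choose s := ih (by omega) r (by omega)
      have h2 : (2 * n).choose s ≤ (2 * n).choose (s + 1) := by
        apply Nat.choose_le_succ_of_lt_half_left
        rw [two_n_div_two]
        omega
      exact h1.trans h2

lemma Wn_second (hn : 1 ≤ n) {d : ℕ} (hd : d ≤ 2 * n) (hdn : d ≠ n) :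
    Wn n (n - 1) ≤ Wn n d := by
  have hch : (2 * n).choose d ≤ (2 * n).choose (n - 1) := by
    rcases le_or_gt d n with hle | hgt
    · exact choose_mono_left (n - 1) (by omega) d (by omega)
    · have hsymm : (2 * n).choose (2 * n - d) = (2 * n).choose d := Nat.choose_symm hd
      rw [← hsymm]
      exact choose_mono_left (n - 1) (by omega) (2 * n - d) (by omega)
  have h1 : Wn n (n - 1) * (2 * n).choose (n - 1) = Wn n d * (2 * n).choose d :=
    (Wn_key (by omega)).trans (Wn_key hd).symm
  have h2 : Wn n (n - 1) * (2 * n).choose (n - 1) ≤ Wn n d * (2 * n).choose (n - 1) := by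
    rw [h1]
    exact Nat.mul_le_mul_left _ hch
  exact Nat.le_of_mul_le_mul_right h2 (Nat.choose_pos (by omega))

lemma Wn_flip {d : ℕ} (hd : d ≤ 2 * n) : Wn n (2 * n - d) = Wn n d := by
  rw [Wn, Wn, (show 2 * n - (2 * n - d) = d by omega), Nat.mul_comm]

end weights

section parity
variable {M : ℕ}

lemma card_symmDiff_parity (X P : Finset (Fin M)) :
    (symmDiff X P).card + 2 * (X ∩ P).card = X.card + P.card := by
  have hdisj : Disjoint (X \ P) (P \ X) := disjoint_sdiff_sdiff
  have hdef : symmDiff X P = (X \ P) ∪ (P \ X) := by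
    rw [symmDiff_def]
    rfl
  have h1 : (symmDiff X P).card = (X \ P).card + (P \ X).card := by
    rw [hdef]
    exact card_union_of_disjoint hdisj
  have h2 : (X \ P).card + (X ∩ P).card = X.card := card_sdiff_add_card_inter X P
  have h3 : (P \ X).card + (P ∩ X).card = P.card := card_sdiff_add_card_inter P X
  have h4 : (P ∩ X).card = (X ∩ P).card := by rw [inter_comm]
  omega

end parity

section complU
variable {M : ℕ} (a : Fin M)

lemma card_U : ((univ : Finset (Fin M)).erase a).card = M - 1 := by
  rw [card_erase_of_mem (mem_univ a), card_univ, Fintype.card_fin]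

lemma symmDiff_sdiff (X P : Finset (Fin M)) (hX : X ⊆ univ.erase a) (hP : P ⊆ univ.erase a) :
    symmDiff X (univ.erase a \ P) = univ.erase a \ symmDiff X P := by
  ext x
  by_cases hxU : x ∈ (univ : Finset (Fin M)).erase a
  · simp only [Finset.mem_symmDiff, mem_sdiff, hxU, true_and]
    tauto
  · have hxX : x ∉ X := fun h => hxU (hX h)
    have hxP : x ∉ P := fun h => hxU (hP h)
    simp only [Finset.mem_symmDiff, mem_sdiff, hxU, hxX, hxP]
    tauto

lemma sdiff_compl_insert (Q : Finset (Fin M)) (hQ : Q ⊆ univ.erase a) :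
    ((univ : Finset (Fin M)).erase a \ Q)ᶜ = insert a Q := by
  ext x
  by_cases hx : x = a
  · subst hx
    simp
  · have : x ∈ (univ : Finset (Fin M)).erase a := mem_erase.2 ⟨hx, mem_univ x⟩
    simp only [mem_compl, mem_sdiff, this, true_and, mem_insert, hx, false_or, not_not]

lemma compl_erase_eq_sdiff (P : Finset (Fin M)) :
    Pᶜ.erase a = (univ : Finset (Fin M)).erase a \ P := by
  ext x
  simp only [mem_erase, mem_compl, mem_sdiff, mem_univ, and_true, true_and]

lemma sum_sdiff_reindex {c c' : ℕ} (hcc : c + c' = M - 1) (φ : Finset (Fin M) → ℝ) :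
    ∑ P ∈ powersetCard c (univ.erase a), φ P
      = ∑ Q ∈ powersetCard c' (univ.erase a), φ (univ.erase a \ Q) := by
  have hU := card_U a
  refine Finset.sum_nbij' (fun P => (univ.erase a) \ P) (fun Q => (univ.erase a) \ Q)
    ?_ ?_ ?_ ?_ ?_
  · intro P hP
    rw [mem_powersetCard] at hP ⊢
    refine ⟨sdiff_subset, ?_⟩
    rw [card_sdiff_of_subset hP.1, hU, hP.2]
    omega
  · intro Q hQ
    rw [mem_powersetCard] at hQ ⊢
    refine ⟨sdiff_subset, ?_⟩
    rw [card_sdiff_of_subset hQ.1, hU, hQ.2]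
    omega
  · intro P hP
    rw [mem_powersetCard] at hP
    exact Finset.sdiff_sdiff_eq_self hP.1
  · intro Q hQ
    rw [mem_powersetCard] at hQ
    exact Finset.sdiff_sdiff_eq_self hQ.1
  · intro P hP
    rw [mem_powersetCard] at hP
    rw [Finset.sdiff_sdiff_eq_self hP.1]

end complU

section main

variable {n : ℕ}

noncomputable def wr (n d : ℕ) : ℝ := (Wn n d : ℝ)

def Uera (n : ℕ) (a : Fin (2 * n + 1)) : Finset (Fin (2 * n + 1)) :=
  (univ : Finset (Fin (2 * n + 1))).erase a

noncomputable def Sone (n : ℕ) (a : Fin (2 * n + 1)) (X : Finset (Fin (2 * n + 1))) : ℝ :=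
  ∑ P ∈ powersetCard n (Uera n a), wr n (symmDiff X P).card

noncomputable def Stwo (n : ℕ) (a : Fin (2 * n + 1)) (G : Finset (Finset (Fin (2 * n + 1))))
    (X : Finset (Fin (2 * n + 1))) : ℝ :=
  ∑ P ∈ powersetCard (n - 1) (Uera n a),
    if insert a P ∈ G then wr n (symmDiff X P).card else 0

noncomputable def Sfour (n : ℕ) (a : Fin (2 * n + 1)) (G : Finset (Finset (Fin (2 * n + 1))))
    (X : Finset (Fin (2 * n + 1))) : ℝ :=
  ∑ P ∈ powersetCard n (Uera n a),
    if P ∈ G then wr n (symmDiff X P).card else 0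

variable {G : Finset (Finset (Fin (2 * n + 1)))}

lemma wr_flip (hn : 1 ≤ n) (a : Fin (2 * n + 1)) {X P : Finset (Fin (2 * n + 1))}
    (hX : X ⊆ Uera n a) (hP : P ⊆ Uera n a) :
    wr n (symmDiff X (Uera n a \ P)).card = wr n (symmDiff X P).card := by
  have hUc : (Uera n a).card = 2 * n := by
    rw [Uera, card_U]
    omega
  have hsub : symmDiff X P ⊆ Uera n a := by
    rw [symmDiff_def]
    exact union_subset (sdiff_subset.trans hX) (sdiff_subset.trans hP)
  have hd : (symmDiff X P).card ≤ 2 * n := by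
    have := card_le_card hsub
    rwa [hUc] at this
  rw [Uera, symmDiff_sdiff a X P hX hP, ← Uera, card_sdiff_of_subset hsub, hUc]
  rw [wr, wr, Wn_flip hd]


lemma lamW_wr (H' : Finset (Finset (Fin (2 * n + 1)))) (a : Fin (2 * n + 1))
    (X : Finset (Fin (2 * n + 1))) (hX : a ∉ X) :
    LamW H' X (insert a X)
      = ∑ P ∈ (univ.erase a).powerset,
          wr n (symmDiff X P).card
            * ((if P ∈ H' then (1 : ℝ) else 0) - (if insert a P ∈ H' then (1 : ℝ) else 0)) := by
  rw [Master.lamW_master H' a X hX]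
  refine Finset.sum_congr rfl fun P _ => ?_
  have h : 2 * n + 1 - 1 - (symmDiff X P).card = 2 * n - (symmDiff X P).card := by omega
  rw [Master.w, wr, Wn, h]

lemma decomp (hn : 1 ≤ n) (hGk : ∀ A ∈ G, A.card = n) (a : Fin (2 * n + 1))
    (X : Finset (Fin (2 * n + 1))) (hXa : a ∉ X) :
    LamW (dualFam ((majFam n \ dualFam G) ∪ G)) X (insert a X)
      = Sone n a X + 2 * Stwo n a G X - 2 * Sfour n a G X := by
  have hXU : X ⊆ Uera n a := by
    intro x hx
    exact mem_erase.2 ⟨fun h => hXa (h ▸ hx), mem_univ x⟩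
  rw [lamW_wr _ a X hXa]
  -- pointwise rewrite
  have hpoint : ∀ P ∈ (univ.erase a).powerset,
      wr n (symmDiff X P).card
        * ((if P ∈ dualFam ((majFam n \ dualFam G) ∪ G) then (1 : ℝ) else 0)
          - (if insert a P ∈ dualFam ((majFam n \ dualFam G) ∪ G) then (1 : ℝ) else 0))
      = (if P.card = n then wr n (symmDiff X P).card else 0)
        + (if P.card = n - 1 ∧ insert a P ∈ G then wr n (symmDiff X P).card else 0)
        + (if P.card = n + 1 ∧ Pᶜ ∈ G then wr n (symmDiff X P).card else 0)
        - (if P.card = n ∧ P ∈ G then wr n (symmDiff X P).card else 0)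
        - (if P.card = n ∧ Uera n a \ P ∈ G then wr n (symmDiff X P).card else 0) := by
    intro P hPmem
    have hPsub : P ⊆ univ.erase a := mem_powerset.1 hPmem
    have hPa : a ∉ P := fun h => (mem_erase.1 (hPsub h)).1 rfl
    rw [if_congr (mem_dualFam (F := (majFam n \ dualFam G) ∪ G) (C := P)) rfl rfl,
      if_congr (mem_dualFam (F := (majFam n \ dualFam G) ∪ G) (C := insert a P)) rfl rfl,
      gval_cases hn hGk a P hPa]
    rw [compl_erase_eq_sdiff a P]
    simp only [Uera]
    rw [mul_sub, mul_sub, mul_add, mul_add]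
    simp only [mul_ite, mul_one, mul_zero]
    rfl
  rw [Finset.sum_congr rfl hpoint]
  rw [Finset.sum_sub_distrib, Finset.sum_sub_distrib, Finset.sum_add_distrib,
    Finset.sum_add_distrib]
  have hps : ∀ (c : ℕ) (q : Finset (Fin (2 * n + 1)) → Prop) [DecidablePred q],
      (∑ P ∈ (univ.erase a).powerset,
        if P.card = c ∧ q P then wr n (symmDiff X P).card else 0)
      = ∑ P ∈ powersetCard c (univ.erase a), if q P then wr n (symmDiff X P).card else 0 := by
    intro c q _
    rw [powersetCard_eq_filter, Finset.sum_filter]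
    refine Finset.sum_congr rfl fun P _ => ?_
    by_cases h1 : P.card = c <;> by_cases h2 : q P <;> simp [h1, h2]
  have hA1 : (∑ P ∈ (univ.erase a).powerset,
      if P.card = n then wr n (symmDiff X P).card else 0) = Sone n a X := by
    rw [Sone, Uera, powersetCard_eq_filter, Finset.sum_filter]
  have hA2 : (∑ P ∈ (univ.erase a).powerset,
      if P.card = n - 1 ∧ insert a P ∈ G then wr n (symmDiff X P).card else 0)
      = Stwo n a G X := by
    rw [hps (n - 1) (fun P => insert a P ∈ G), Stwo, Uera]
  have hA4 : (∑ P ∈ (univ.erase a).powerset,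
      if P.card = n ∧ P ∈ G then wr n (symmDiff X P).card else 0) = Sfour n a G X := by
    rw [hps n (fun P => P ∈ G), Sfour, Uera]
  have hA3 : (∑ P ∈ (univ.erase a).powerset,
      if P.card = n + 1 ∧ Pᶜ ∈ G then wr n (symmDiff X P).card else 0) = Stwo n a G X := by
    rw [hps (n + 1) (fun P => Pᶜ ∈ G)]
    have hre := sum_sdiff_reindex a (c := n + 1) (c' := n - 1) (by omega)
      (fun P => if Pᶜ ∈ G then wr n (symmDiff X P).card else 0)
    rw [hre, Stwo, Uera]
    refine Finset.sum_congr rfl fun Q hQ => ?_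
    have hQsub : Q ⊆ univ.erase a := (mem_powersetCard.1 hQ).1
    rw [sdiff_compl_insert a Q hQsub]
    by_cases h : insert a Q ∈ G
    · rw [if_pos h, if_pos h]
      exact wr_flip hn a hXU hQsub
    · rw [if_neg h, if_neg h]
  have hA5 : (∑ P ∈ (univ.erase a).powerset,
      if P.card = n ∧ Uera n a \ P ∈ G then wr n (symmDiff X P).card else 0)
      = Sfour n a G X := by
    rw [hps n (fun P => Uera n a \ P ∈ G)]
    have hre := sum_sdiff_reindex a (c := n) (c' := n) (by omega)
      (fun P => if Uera n a \ P ∈ G then wr n (symmDiff X P).card else 0)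
    simp only [Uera]
    simp only [Uera] at hre
    rw [hre, Sfour]
    simp only [Uera]
    refine Finset.sum_congr rfl fun Q hQ => ?_
    have hQsub : Q ⊆ univ.erase a := (mem_powersetCard.1 hQ).1
    simp only [Finset.sdiff_sdiff_eq_self hQsub]
    by_cases h : Q ∈ G
    · rw [if_pos h, if_pos h]
      exact wr_flip hn a hXU hQsub
    · rw [if_neg h, if_neg h]
  rw [hA1, hA2, hA3, hA4, hA5]
  ring

end main

section mainineq
variable {n : ℕ} {G : Finset (Finset (Fin (2 * n + 1)))}

lemma main_ineq (hn : 1 ≤ n) (hGi : IsIntersecting G) (hGk : ∀ A ∈ G, A.card = n)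
    (hGcard : 2 * G.card ≤ (2 * n).choose n) (a : Fin (2 * n + 1))
    (X : Finset (Fin (2 * n + 1))) (hXa : a ∉ X) :
    Sone n a ∅ + 2 * Stwo n a G ∅ - 2 * Sfour n a G ∅
      ≤ Sone n a X + 2 * Stwo n a G X - 2 * Sfour n a G X := by
  classical
  have hXU : X ⊆ Uera n a := fun x hx => mem_erase.2 ⟨fun h => hXa (h ▸ hx), mem_univ x⟩
  have hUc : (Uera n a).card = 2 * n := by
    rw [Uera, card_U]
    omega
  have hdle : ∀ P : Finset (Fin (2 * n + 1)), P ⊆ Uera n a →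
      (symmDiff X P).card ≤ 2 * n := by
    intro P hP
    have hsub : symmDiff X P ⊆ Uera n a := by
      rw [symmDiff_def]
      exact union_subset (sdiff_subset.trans hXU) (sdiff_subset.trans hP)
    have := card_le_card hsub
    rwa [hUc] at this
  set ε : ℝ := if Odd X.card then wr n (n - 1) - wr n n else 0 with hεdef
  have hΔ : 0 ≤ wr n (n - 1) - wr n n := by
    rw [sub_nonneg, wr, wr]
    exact_mod_cast Wn_min (by omega)
  have hε0 : 0 ≤ ε := by
    rw [hεdef]
    split
    · exact hΔ
    · exact le_refl 0
  have hwmin : ∀ d, d ≤ 2 * n → wr n n ≤ wr n d := fun d hd => by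
    rw [wr, wr]; exact_mod_cast Wn_min hd
  have hwsec : ∀ d, d ≤ 2 * n → d ≠ n → wr n (n - 1) ≤ wr n d := fun d hd hdn => by
    rw [wr, wr]; exact_mod_cast Wn_second hn hd hdn
  set D := powersetCard n (Uera n a) with hD
  set Gd := D.filter (fun P => P ∈ G) with hGd
  set Gc := D.filter (fun P => Uera n a \ P ∈ G) with hGc
  set FI := (powersetCard (n - 1) (Uera n a)).filter (fun P => insert a P ∈ G) with hFI
  have hsd0 : ∀ P : Finset (Fin (2 * n + 1)), symmDiff ∅ P = P := by
    intro P
    rw [symmDiff_def]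
    simp
  have hS1X : Sone n a X = ∑ P ∈ D, wr n (symmDiff X P).card := rfl
  have hS1e : Sone n a ∅ = ∑ P ∈ D, wr n n := by
    rw [Sone]
    refine sum_congr rfl fun P hP => ?_
    rw [hsd0 P, (mem_powersetCard.1 hP).2]
  have hS2X : Stwo n a G X = ∑ P ∈ FI, wr n (symmDiff X P).card := by
    rw [Stwo, hFI, Finset.sum_filter]
  have hS2e : Stwo n a G ∅ = ∑ P ∈ FI, wr n (n - 1) := by
    rw [Stwo, ← Finset.sum_filter, ← hFI]
    refine sum_congr rfl fun P hP => ?_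
    rw [hFI, mem_filter] at hP
    rw [hsd0 P, (mem_powersetCard.1 hP.1).2]
  have hS4X : Sfour n a G X = ∑ P ∈ Gd, wr n (symmDiff X P).card := by
    rw [Sfour, hGd, hD, Finset.sum_filter]
  have hS4e : Sfour n a G ∅ = ∑ P ∈ Gd, wr n n := by
    rw [Sfour, ← Finset.sum_filter, ← hD, ← hGd]
    refine sum_congr rfl fun P hP => ?_
    rw [hGd, mem_filter, hD] at hP
    rw [hsd0 P, (mem_powersetCard.1 hP.1).2]
  -- bounds
  have htge : ∀ P ∈ D, ε ≤ wr n (symmDiff X P).card - wr n n := by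
    intro P hP
    obtain ⟨hPsub, hPcard⟩ := mem_powersetCard.1 (hD ▸ hP)
    have hd := hdle P hPsub
    rcases Nat.even_or_odd X.card with hev | hod
    · have hno : ¬ Odd X.card := Nat.not_odd_iff_even.2 hev
      rw [hεdef, if_neg hno]
      linarith [hwmin _ hd]
    · rw [hεdef, if_pos hod]
      have hne : (symmDiff X P).card ≠ n := by
        have hpar := card_symmDiff_parity X P
        obtain ⟨k, hk⟩ := hod
        intro h
        omega
      linarith [hwsec _ hd hne]
  have hFIub : ∀ P ∈ FI, wr n (n - 1) - wr n (symmDiff X P).card ≤ ε := by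
    intro P hP
    rw [hFI, mem_filter] at hP
    obtain ⟨hPsub, hPcard⟩ := mem_powersetCard.1 hP.1
    have hd := hdle P hPsub
    rcases Nat.even_or_odd X.card with hev | hod
    · have hno : ¬ Odd X.card := Nat.not_odd_iff_even.2 hev
      rw [hεdef, if_neg hno]
      have hne : (symmDiff X P).card ≠ n := by
        have hpar := card_symmDiff_parity X P
        obtain ⟨k, hk⟩ := hev
        intro h
        omega
      linarith [hwsec _ hd hne]
    · rw [hεdef, if_pos hod]
      linarith [hwmin _ hd]
  have hsum2 : Stwo n a G ∅ - Stwo n a G X ≤ (FI.card : ℝ) * ε := by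
    rw [hS2e, hS2X, ← Finset.sum_sub_distrib]
    have := Finset.sum_le_card_nsmul FI _ ε hFIub
    rwa [nsmul_eq_mul] at this
  -- Gc ↔ Gd
  have hGcGdsum : (∑ P ∈ Gc, wr n (symmDiff X P).card)
      = ∑ P ∈ Gd, wr n (symmDiff X P).card := by
    rw [hGc, hGd, hD, Finset.sum_filter, Finset.sum_filter]
    have hre := sum_sdiff_reindex a (c := n) (c' := n) (M := 2 * n + 1) (by omega)
      (fun P => if Uera n a \ P ∈ G then wr n (symmDiff X P).card else 0)
    simp only [Uera] at hre ⊢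
    rw [hre]
    refine sum_congr rfl fun Q hQ => ?_
    have hQsub : Q ⊆ univ.erase a := (mem_powersetCard.1 hQ).1
    simp only [Finset.sdiff_sdiff_eq_self hQsub]
    by_cases h : Q ∈ G
    · rw [if_pos h, if_pos h]
      exact wr_flip hn a hXU hQsub
    · rw [if_neg h, if_neg h]
  have hdisjGdGc : Disjoint Gd Gc := by
    rw [Finset.disjoint_left]
    intro P hP1 hP2
    rw [hGd, mem_filter] at hP1
    rw [hGc, mem_filter] at hP2
    have hnon := hGi P hP1.2 _ hP2.2
    have hemp : P ∩ (Uera n a \ P) = ∅ := Finset.inter_sdiff_self P (Uera n a)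
    rw [hemp] at hnon
    exact Finset.not_nonempty_empty hnon
  have hGdGcsub : Gd ∪ Gc ⊆ D := union_subset (filter_subset _ _) (filter_subset _ _)
  -- cards
  have hDcard : D.card = (2 * n).choose n := by
    rw [hD, card_powersetCard, hUc]
  have hGd_eq : Gd = G.filter (fun B => a ∉ B) := by
    ext B
    rw [hGd, mem_filter, hD, mem_powersetCard, mem_filter]
    constructor
    · rintro ⟨⟨hsub, _⟩, hBG⟩
      exact ⟨hBG, fun h => (mem_erase.1 (hsub h)).1 rfl⟩
    · rintro ⟨hBG, haB⟩
      exact ⟨⟨fun x hx => mem_erase.2 ⟨fun h => haB (h ▸ hx), mem_univ x⟩, hGk B hBG⟩, hBG⟩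
  have hGccard : Gc.card = Gd.card := by
    refine Finset.card_nbij' (fun P => Uera n a \ P) (fun P => Uera n a \ P) ?_ ?_ ?_ ?_
    · intro P hP
      simp only [Finset.mem_coe] at hP ⊢
      rw [hGc, mem_filter, hD, mem_powersetCard] at hP
      rw [hGd, mem_filter, hD, mem_powersetCard]
      refine ⟨⟨sdiff_subset, ?_⟩, hP.2⟩
      rw [card_sdiff_of_subset hP.1.1, hUc, hP.1.2]
      omega
    · intro P hP
      simp only [Finset.mem_coe] at hP ⊢
      rw [hGd, mem_filter, hD, mem_powersetCard] at hP
      rw [hGc, mem_filter, hD, mem_powersetCard]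
      refine ⟨⟨sdiff_subset, ?_⟩, ?_⟩
      · rw [card_sdiff_of_subset hP.1.1, hUc, hP.1.2]
        omega
      · rw [Finset.sdiff_sdiff_eq_self hP.1.1]
        exact hP.2
    · intro P hP
      simp only [Finset.mem_coe] at hP
      rw [hGc, mem_filter, hD, mem_powersetCard] at hP
      exact Finset.sdiff_sdiff_eq_self hP.1.1
    · intro P hP
      simp only [Finset.mem_coe] at hP
      rw [hGd, mem_filter, hD, mem_powersetCard] at hP
      exact Finset.sdiff_sdiff_eq_self hP.1.1
  have hFIcard : FI.card = (G.filter fun B => a ∈ B).card := by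
    refine Finset.card_nbij' (fun P => insert a P) (fun B => B.erase a) ?_ ?_ ?_ ?_
    · intro P hP
      simp only [Finset.mem_coe] at hP ⊢
      rw [hFI, mem_filter] at hP
      rw [mem_filter]
      exact ⟨hP.2, mem_insert_self a P⟩
    · intro B hB
      simp only [Finset.mem_coe] at hB ⊢
      rw [mem_filter] at hB
      rw [hFI, mem_filter, mem_powersetCard]
      refine ⟨⟨?_, ?_⟩, ?_⟩
      · exact erase_subset_erase a (subset_univ B)
      · rw [card_erase_of_mem hB.2, hGk B hB.1]
      · rw [insert_erase hB.2]
        exact hB.1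
    · intro P hP
      simp only [Finset.mem_coe] at hP
      rw [hFI, mem_filter, mem_powersetCard] at hP
      have haP : a ∉ P := fun h => (mem_erase.1 (hP.1.1 h)).1 rfl
      exact erase_insert haP
    · intro B hB
      simp only [Finset.mem_coe] at hB
      rw [mem_filter] at hB
      exact insert_erase hB.2
  have hGsplit : (G.filter fun B => a ∈ B).card + (G.filter fun B => a ∉ B).card = G.card := by
    exact card_filter_add_card_filter_not (fun B => a ∈ B)
  have hrestcard : 2 * FI.card ≤ (D \ (Gd ∪ Gc)).card := by
    rw [card_sdiff_of_subset hGdGcsub, card_union_of_disjoint hdisjGdGc, hGccard, hDcard, hFIcard]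
    have h1 : Gd.card = (G.filter fun B => a ∉ B).card := by rw [hGd_eq]
    omega
  -- assemble
  have hsplitD : (∑ P ∈ D, (wr n (symmDiff X P).card - wr n n))
      = (∑ P ∈ D \ (Gd ∪ Gc), (wr n (symmDiff X P).card - wr n n))
        + ((∑ P ∈ Gd, (wr n (symmDiff X P).card - wr n n))
          + (∑ P ∈ Gc, (wr n (symmDiff X P).card - wr n n))) := by
    rw [← Finset.sum_union hdisjGdGc, Finset.sum_sdiff hGdGcsub]
  have hGcGdtsum : (∑ P ∈ Gc, (wr n (symmDiff X P).card - wr n n))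
      = ∑ P ∈ Gd, (wr n (symmDiff X P).card - wr n n) := by
    rw [Finset.sum_sub_distrib, Finset.sum_sub_distrib, hGcGdsum, Finset.sum_const,
      Finset.sum_const, hGccard]
  have hrest_ge : ((D \ (Gd ∪ Gc)).card : ℝ) * ε
      ≤ ∑ P ∈ D \ (Gd ∪ Gc), (wr n (symmDiff X P).card - wr n n) := by
    have := Finset.card_nsmul_le_sum (D \ (Gd ∪ Gc)) _ ε
      (fun P hP => htge P (mem_sdiff.1 hP).1)
    rwa [nsmul_eq_mul] at this
  have hcast : (2 * FI.card : ℝ) ≤ ((D \ (Gd ∪ Gc)).card : ℝ) := by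
    exact_mod_cast hrestcard
  have hrest_ge2 : (2 * FI.card : ℝ) * ε
      ≤ ∑ P ∈ D \ (Gd ∪ Gc), (wr n (symmDiff X P).card - wr n n) :=
    le_trans (mul_le_mul_of_nonneg_right hcast hε0) hrest_ge
  have hS1diff : Sone n a X - Sone n a ∅ = ∑ P ∈ D, (wr n (symmDiff X P).card - wr n n) := by
    rw [hS1X, hS1e, ← Finset.sum_sub_distrib]
  have hS4diff : Sfour n a G X - Sfour n a G ∅
      = ∑ P ∈ Gd, (wr n (symmDiff X P).card - wr n n) := by
    rw [hS4X, hS4e, ← Finset.sum_sub_distrib]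
  linarith [hsplitD, hGcGdtsum, hrest_ge2, hsum2, hS1diff, hS4diff]

end mainineq

end NCaux

/-- Modifying a central maximal intersecting family of `P([2n+1])` by a small intersecting
family of `n`-sets yields an `∅`-minimal maximal intersecting family. -/
theorem near_central_emptyMinimal (n : ℕ) (hn : 1 ≤ n)
    (F : Finset (Finset (Fin (2 * n + 1)))) (hF : IsMaxIntersecting F)
    (hcentral : ∀ A ∈ F, 2 * n + 1 ≤ 2 * A.card)
    (G : Finset (Finset (Fin (2 * n + 1)))) (hGi : IsIntersecting G)
    (hGk : ∀ A ∈ G, A.card = n)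
    (hGcard : 2 * G.card ≤ Nat.choose (2 * n) n) :
    IsMaxIntersecting ((F \ dualFam G) ∪ G) ∧ EmptyMinimal ((F \ dualFam G) ∪ G) := by
  have hFeq : F = NCaux.majFam n := NCaux.F_eq_majFam hF hcentral
  subst hFeq
  constructor
  · exact NCaux.H_max hn hGi hGk
  · intro a A haA
    have hd0 := NCaux.decomp (G := G) hn hGk a ∅ (notMem_empty a)
    have hdA := NCaux.decomp (G := G) hn hGk a A haA
    have h0 : ({a} : Finset (Fin (2 * n + 1))) = insert a ∅ := by simp
    rw [h0, hd0, hdA]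
    exact NCaux.main_ineq hn hGi hGk hGcard a A haA
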